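/- Assume ht I_m(A₁,…,Aₙ) ≥ n − m. Then there exists an invertible n×n matrix φ over R such that the matrix B := A·φ (whose columns B₁,…,Bₙ are R-linear combinations of the columns of A) satisfies ht I_m(B₁,…,B_k) ≥ k − m + 1 for every k = m+1,…,n−1. -/

import Mathlib

/-- The height of an ideal: the infimum of the heights of the primes containing it. -/
noncomputable def idealHeight {R : Type*} [CommRing R] (I : Ideal R) : ℕ∞ :=
  ⨅ (p : PrimeSpectrum R) (_ : I ≤ p.asIdeal), Order.height p

/-- `rs` is a regular sequence on `R`: each entry is a nonzerodivisor modulo the ideal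
generated by the earlier entries, and the entries generate a proper ideal. -/
def IsRegularSequence (R : Type*) [CommRing R] (rs : List R) : Prop :=
  (∀ i : Fin rs.length, ∀ a : R,
      rs.get i * a ∈ Ideal.span {z | z ∈ rs.take (i : ℕ)} →
      a ∈ Ideal.span {z | z ∈ rs.take (i : ℕ)}) ∧
  Ideal.span {z | z ∈ rs} ≠ ⊤

/-- A local ring is Cohen–Macaulay if it admits a regular sequence in the maximal ideal
whose length equals the Krull dimension. -/
def IsCohenMacaulayLocalRing (R : Type*) [CommRing R] [IsLocalRing R] : Prop :=
  ∃ rs : List R, (∀ z ∈ rs, z ∈ IsLocalRing.maximalIdeal R) ∧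
    IsRegularSequence R rs ∧ ((rs.length : ℕ∞) : WithBot ℕ∞) = ringKrullDim R

/-- `I_m(B₁,…,B_k)`: the ideal generated by the `m × m` minors of the submatrix of `B`
formed by the first `k` columns (columns taken in their original order). -/
def minorIdeal {R : Type*} [CommRing R] (m n : ℕ) (B : Fin n → (Fin m → R)) (k : ℕ) :
    Ideal R :=
  Ideal.span {d | ∃ g : Fin m → Fin n, StrictMono g ∧ (∀ l, (g l : ℕ) < k) ∧
    d = Matrix.det (Matrix.of fun i l => B (g l) i)}

/-! ### Auxiliary material -/

section Aux

open Matrix IsLocalRing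

variable {R : Type*} [CommRing R]

/-- The ideal of `t × t` minors of the matrix with columns `C j`, using only columns of
index `< k`.  Rows are selected by a strictly monotone `r`, columns by a strictly
monotone `g`. -/
def tminors (m : ℕ) {n : ℕ} (t : ℕ) (C : Fin n → Fin m → R) (k : ℕ) : Ideal R :=
  Ideal.span {d | ∃ (r : Fin t → Fin m) (g : Fin t → Fin n), StrictMono r ∧ StrictMono g ∧
    (∀ l, (g l : ℕ) < k) ∧ d = Matrix.det (Matrix.of fun i l => C (g l) (r i))}

lemma tminors_zero (m : ℕ) {n : ℕ} (C : Fin n → Fin m → R) (k : ℕ) :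
    tminors m 0 C k = ⊤ := by
  rw [Ideal.eq_top_iff_one]
  refine Ideal.subset_span ⟨Fin.elim0, Fin.elim0, ?_, ?_, fun x => x.elim0, Matrix.det_fin_zero.symm⟩
  · intro a b _; exact a.elim0
  · intro a b _; exact a.elim0

lemma tminors_mono (m t : ℕ) {n : ℕ} (C : Fin n → Fin m → R) {k k' : ℕ} (h : k ≤ k') :
    tminors m t C k ≤ tminors m t C k' := by
  apply Ideal.span_mono
  rintro d ⟨r, g, h1, h2, h3, h4⟩
  exact ⟨r, g, h1, h2, fun l => lt_of_lt_of_le (h3 l) h, h4⟩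

lemma tminors_congr (m t : ℕ) {n : ℕ} {C C' : Fin n → Fin m → R} {k : ℕ}
    (h : ∀ j : Fin n, (j : ℕ) < k → C j = C' j) :
    tminors m t C k = tminors m t C' k := by
  apply le_antisymm
  · apply Ideal.span_mono
    rintro d ⟨r, g, h1, h2, h3, rfl⟩
    exact ⟨r, g, h1, h2, h3, by congr 1; ext i l; simp [h (g l) (h3 l)]⟩
  · apply Ideal.span_mono
    rintro d ⟨r, g, h1, h2, h3, rfl⟩
    exact ⟨r, g, h1, h2, h3, by congr 1; ext i l; simp [h (g l) (h3 l)]⟩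

lemma strictMono_fin_id {m : ℕ} {f : Fin m → Fin m} (hf : StrictMono f) : f = id := by
  have hsurj : Function.Surjective f := Finite.surjective_of_injective hf.injective
  have h : Set.range f = Set.range (id : Fin m → Fin m) := by
    rw [Set.range_eq_univ.mpr hsurj, Set.range_id]
  exact (@StrictMono.range_inj (Fin m) (Fin m) _ _
    (inferInstance : WellFoundedLT (Fin m)) f id hf strictMono_id).mp h

lemma tminors_eq_minorIdeal (m : ℕ) {n : ℕ} (C : Fin n → Fin m → R) (k : ℕ) :
    tminors m m C k = minorIdeal m n C k := by
  unfold tminors minorIdeal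
  congr 1
  ext d
  constructor
  · rintro ⟨r, g, hr, hg, h3, rfl⟩
    rw [strictMono_fin_id hr]
    exact ⟨g, hg, h3, rfl⟩
  · rintro ⟨g, hg, h3, rfl⟩
    exact ⟨id, g, strictMono_id, hg, h3, rfl⟩

lemma height_add_one_le {p q : PrimeSpectrum R} (h : q < p) :
    Order.height q + 1 ≤ Order.height p := by
  rw [Order.height_eq_iSup_lt_height p]
  exact le_iSup₂ (f := fun y (_ : y < p) => Order.height y + 1) q h

lemma minimalPrimes_finite [IsNoetherianRing R] (I : Ideal R) : I.minimalPrimes.Finite := by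
  rw [Ideal.minimalPrimes_eq_comap]
  exact (minimalPrimes.finite_of_isNoetherianRing (R ⧸ I)).image _

lemma strictMono_snoc {n s : ℕ} {g : Fin s → Fin n} (hg : StrictMono g) {y : Fin n}
    (hy : ∀ l, g l < y) : StrictMono (Fin.snoc g y : Fin (s + 1) → Fin n) := by
  intro a b hab
  induction b using Fin.lastCases with
  | last =>
    have ha : a ≠ Fin.last s := ne_of_lt hab
    obtain ⟨a', rfl⟩ := Fin.exists_castSucc_eq.mpr ha
    simpa [Fin.snoc_castSucc, Fin.snoc_last] using hy a'
  | cast b' =>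
    have ha : a ≠ Fin.last s := by
      rintro rfl
      exact absurd (lt_trans hab (Fin.castSucc_lt_last b')) (lt_irrefl _)
    obtain ⟨a', rfl⟩ := Fin.exists_castSucc_eq.mpr ha
    simp only [Fin.snoc_castSucc]
    exact hg (Fin.castSucc_lt_castSucc_iff.mp hab)


open Finset in
lemma det_comp_zero_of_strictMono {F : Type*} [CommRing F] {m s : ℕ}
    (cols : Fin s → Fin m → F)
    (h : ∀ rr : Fin s → Fin m, StrictMono rr →
      (Matrix.of fun i l => cols l (rr i)).det = 0)
    (rr : Fin s → Fin m) : (Matrix.of fun i l => cols l (rr i)).det = 0 := by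
  classical
  by_cases hinj : Function.Injective rr
  · set t : Finset (Fin m) := Finset.image rr Finset.univ with ht
    have hcard : t.card = s := by
      rw [ht, Finset.card_image_of_injective _ hinj, Finset.card_univ, Fintype.card_fin]
    set iso := t.orderIsoOfFin hcard with hiso
    have hmono : StrictMono (fun i => (iso i : Fin m)) := fun a b hab =>
      Subtype.coe_lt_coe.mpr (iso.strictMono hab)
    have hmem : ∀ i, rr i ∈ t := fun i => Finset.mem_image.mpr ⟨i, Finset.mem_univ i, rfl⟩
    set φ : Fin s → Fin s := fun i => iso.symm ⟨rr i, hmem i⟩ with hφ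
    have hφinj : Function.Injective φ := by
      intro a b hab
      apply hinj
      have := congrArg (fun z => ((iso z : t) : Fin m)) hab
      simpa [hφ] using this
    set σ := Equiv.ofBijective φ (Finite.injective_iff_bijective.mp hφinj) with hσ
    have hrr : ∀ i, rr i = (iso (σ i) : Fin m) := by
      intro i; simp [hσ, hφ, Equiv.ofBijective_apply]
    have hmat : (Matrix.of fun i l => cols l (rr i))
        = (Matrix.of fun i l => cols l (iso i : Fin m)).submatrix σ id := by
      ext i l; simp [hrr i]
    rw [hmat, Matrix.det_permute σ, h _ hmono, mul_zero]
  · rw [Function.not_injective_iff] at hinj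
    obtain ⟨a, b, hab, hne⟩ := hinj
    exact Matrix.det_zero_of_row_eq hne (funext fun l => by simp [hab])

lemma mem_span_of_dets_eq_zero {F : Type*} [Field F] {m t' : ℕ}
    (c : Fin t' → Fin m → F) (w : Fin m → F) (r0 : Fin t' → Fin m)
    (hC0 : (Matrix.of fun i l => c l (r0 i)).det ≠ 0)
    (hdets : ∀ rr : Fin (t' + 1) → Fin m,
      (Matrix.of fun i l => (Fin.snoc c w : Fin (t' + 1) → Fin m → F) l (rr i)).det = 0) :
    w ∈ Submodule.span F (Set.range c) := by
  classical
  set C0 : Matrix (Fin t') (Fin t') F := Matrix.of fun i l => c l (r0 i) with hC0def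
  have hC0unit : IsUnit C0.det := Ne.isUnit hC0
  set x : Fin t' → F := C0⁻¹ *ᵥ (fun i => w (r0 i)) with hx
  have hxeq : C0 *ᵥ x = fun i => w (r0 i) := by
    rw [hx, Matrix.mulVec_mulVec, Matrix.mul_nonsing_inv _ hC0unit, Matrix.one_mulVec]
  set e : Fin m → F := w - ∑ l, x l • c l with he
  have he0 : ∀ i', e (r0 i') = 0 := by
    intro i'
    have h1 := congrFun hxeq i'
    have h2 : (C0 *ᵥ x) i' = ∑ l, x l * c l (r0 i') := by
      simp [Matrix.mulVec, dotProduct, hC0def, mul_comm]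
    have h3 : e (r0 i') = w (r0 i') - ∑ l, x l * c l (r0 i') := by
      simp [he, Finset.sum_apply]
    rw [h3, ← h2, h1, sub_self]
  have hei : ∀ i, e i = 0 := by
    intro i
    set rr : Fin (t' + 1) → Fin m := Fin.snoc r0 i with hrr
    set D : Matrix (Fin (t' + 1)) (Fin (t' + 1)) F :=
      Matrix.of fun i' l => (Fin.snoc c w : Fin (t' + 1) → Fin m → F) l (rr i') with hD
    have hDdet : D.det = 0 := hdets rr
    -- cramer computation
    have hcram : D.cramer (fun i' => e (rr i')) (Fin.last t') = 0 := by
      have hsplit : (fun i' => e (rr i'))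
          = (fun i' => w (rr i')) - ∑ l, x l • (fun i' => c l (rr i')) := by
        funext i'; simp [he, Finset.sum_apply]
      rw [hsplit, map_sub, map_sum]
      have h1 : D.cramer (fun i' => w (rr i')) = Pi.single (Fin.last t') D.det := by
        apply Matrix.cramer_row_self
        intro j; simp [hD, Fin.snoc_last]
      have h2 : ∀ l : Fin t',
          D.cramer (x l • fun i' => c l (rr i'))
            = x l • (Pi.single (l.castSucc) D.det : Fin (t' + 1) → F) := by
        intro l
        rw [_root_.map_smul]
        congr 1
        apply Matrix.cramer_row_self
        intro j; simp [hD, Fin.snoc_castSucc]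
      simp only [h2]
      rw [h1]
      simp [hDdet]
    have hexp : D.cramer (fun i' => e (rr i')) (Fin.last t') = e i * C0.det := by
      rw [Matrix.cramer_apply]
      set E := D.updateCol (Fin.last t') (fun i' => e (rr i')) with hE
      rw [Matrix.det_succ_column E (Fin.last t')]
      have hzero : ∀ i' : Fin (t' + 1), i' ≠ Fin.last t' → E i' (Fin.last t') = 0 := by
        intro i' hne
        obtain ⟨i'', rfl⟩ := Fin.exists_castSucc_eq.mpr hne
        rw [hE, Matrix.updateCol_self]
        simp only [hrr, Fin.snoc_castSucc]
        exact he0 i''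
      rw [Finset.sum_eq_single (Fin.last t')]
      · have hElast : E (Fin.last t') (Fin.last t') = e i := by
          rw [hE, Matrix.updateCol_self]; simp [hrr, Fin.snoc_last]
        have hsub : E.submatrix (Fin.last t').succAbove (Fin.last t').succAbove = C0 := by
          ext i'' l
          simp only [Matrix.submatrix_apply, Fin.succAbove_last]
          rw [hE, Matrix.updateCol_ne (Fin.castSucc_lt_last l).ne]
          simp [hD, hrr, Fin.snoc_castSucc, hC0def]
        rw [hElast, hsub]
        have : ((-1 : F) ^ ((Fin.last t' : ℕ) + (Fin.last t' : ℕ))) = 1 := by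
          rw [← two_mul, pow_mul]; norm_num
        rw [this, one_mul]
      · intro b _ hb
        rw [hzero b hb, mul_zero, zero_mul]
      · intro habs; exact absurd (Finset.mem_univ _) habs
    rw [hexp] at hcram
    exact (mul_eq_zero.mp hcram).resolve_right hC0
  have hw : w = ∑ l, x l • c l := by
    have := sub_eq_zero.mp (funext hei : e = 0)
    simpa [he] using this
  rw [hw]
  exact Submodule.sum_mem _ fun l _ =>
    Submodule.smul_mem _ _ (Submodule.subset_span ⟨l, rfl⟩)

lemma det_eq_zero_of_cols_in_span {F : Type*} [Field F] {s t' : ℕ} (hts : t' < s)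
    (cols : Fin s → Fin s → F) (c : Fin t' → Fin s → F)
    (hcols : ∀ l, cols l ∈ Submodule.span F (Set.range c)) :
    (Matrix.of fun i l => cols l i).det = 0 := by
  classical
  rw [← Matrix.exists_mulVec_eq_zero_iff]
  haveI hW : FiniteDimensional F (Submodule.span F (Set.range c)) :=
    FiniteDimensional.span_of_finite F (Set.finite_range c)
  have hnot : ¬ LinearIndependent F cols := by
    intro hli
    set W := Submodule.span F (Set.range c) with hWdef
    have hli' : LinearIndependent F (fun l => (⟨cols l, hcols l⟩ : W)) := by
      apply LinearIndependent.of_comp W.subtype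
      convert hli
      rfl
    have hcard := hli'.fintype_card_le_finrank
    have hfr : Module.finrank F W ≤ t' := by
      refine le_trans (finrank_span_le_card (Set.range c)) ?_
      rw [Set.toFinset_range]
      exact le_trans (Finset.card_image_le) (by simp)
    rw [Fintype.card_fin] at hcard
    omega
  obtain ⟨gc, hg0, l0, hl0⟩ := Fintype.not_linearIndependent_iff.mp hnot
  refine ⟨gc, ?_, ?_⟩
  · intro hgz; apply hl0; rw [hgz]; rfl
  · ext i
    have := congrFun hg0 i
    simpa [Matrix.mulVec, dotProduct, Finset.sum_apply, mul_comm] using this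

lemma submodule_eq_top_of_residue [IsLocalRing R] {M : Type*} [AddCommGroup M] [Module R M]
    [Module.Finite R M] {N : Submodule R M}
    (h : N ⊔ (maximalIdeal R) • (⊤ : Submodule R M) = ⊤) : N = ⊤ := by
  have hmapN : Submodule.map N.mkQ N = ⊥ := by
    rw [eq_bot_iff]
    exact Submodule.map_le_iff_le_comap.mpr (by rw [Submodule.comap_bot, Submodule.ker_mkQ])
  have h1 : (⊤ : Submodule R (M ⧸ N)) ≤ (maximalIdeal R) • ⊤ := by
    have := congrArg (Submodule.map N.mkQ) h
    rw [Submodule.map_sup, hmapN, bot_sup_eq, Submodule.map_smul'',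
      Submodule.map_top, Submodule.range_mkQ] at this
    exact le_of_eq this.symm
  haveI : Module.Finite R (M ⧸ N) := Module.Finite.of_surjective N.mkQ (Submodule.mkQ_surjective N)
  have hjac : maximalIdeal R ≤ (⊥ : Ideal R).jacobson := by
    rw [Ideal.jacobson]
    exact le_sInf fun J hJ => le_of_eq (eq_maximalIdeal hJ.2).symm
  have h2 : (⊤ : Submodule R (M ⧸ N)) = ⊥ :=
    Submodule.eq_bot_of_le_smul_of_le_jacobson_bot (maximalIdeal R) ⊤
      Module.Finite.fg_top h1 hjac
  have : Subsingleton (M ⧸ N) := by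
    constructor
    intro a b
    have ha : a ∈ (⊥ : Submodule R (M ⧸ N)) := h2 ▸ Submodule.mem_top
    have hb : b ∈ (⊥ : Submodule R (M ⧸ N)) := h2 ▸ Submodule.mem_top
    rw [Submodule.mem_bot] at ha hb
    rw [ha, hb]
  exact Submodule.Quotient.subsingleton_iff.mp this

lemma exists_avoid_subspaces {K E : Type*} [Field K] [Infinite K] [AddCommGroup E]
    [Module K E] {S : Set (Submodule K E)} (hfin : S.Finite)
    (hproper : ∀ V ∈ S, V ≠ ⊤) : ∃ x : E, ∀ V ∈ S, x ∉ V := by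
  by_contra hc
  push_neg at hc
  have hcover : ⋃ (V : S), ((V : Submodule K E) : Set E) = Set.univ := by
    ext x
    simp only [Set.mem_iUnion, Set.mem_univ, iff_true]
    obtain ⟨V, hV, hxV⟩ := hc x
    exact ⟨⟨V, hV⟩, hxV⟩
  haveI : Finite S := hfin
  obtain ⟨⟨V, hV⟩, h⟩ := Subspace.exists_eq_top_of_iUnion_eq_univ hcover
  exact hproper V hV h

lemma exists_good_minor {m n : ℕ} (A : Fin n → Fin m → R)
    {q : Ideal R} (hq : q.IsPrime) {t' k : ℕ} (htm : t' + 1 ≤ m)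
    (Bv : Fin n → Fin m → R)
    (hsome : ¬ tminors m t' Bv k ≤ q)
    (hA : ¬ tminors m m A n ≤ q) :
    ∃ (rr : Fin (t' + 1) → Fin m) (gg : Fin t' → Fin n), StrictMono rr ∧ StrictMono gg ∧
      (∀ l, (gg l : ℕ) < k) ∧ ∃ j : Fin n,
      (Matrix.of fun i l =>
        (Fin.snoc (fun l' => Bv (gg l')) (A j) : Fin (t' + 1) → Fin m → R) l (rr i)).det ∉ q := by
  classical
  haveI := hq
  -- a nonvanishing t'-minor of Bv
  have hsome' : ∃ d ∈ {d | ∃ (r : Fin t' → Fin m) (g : Fin t' → Fin n), StrictMono r ∧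
      StrictMono g ∧ (∀ l, (g l : ℕ) < k) ∧
      d = Matrix.det (Matrix.of fun i l => Bv (g l) (r i))}, d ∉ q := by
    by_contra hcon
    push_neg at hcon
    exact hsome (Ideal.span_le.mpr hcon)
  obtain ⟨d, ⟨r0, g0, hr0, hg0, hg0k, rfl⟩, hdq⟩ := hsome'
  by_contra hcon
  push_neg at hcon
  -- pass to the fraction field of R/q
  set F := FractionRing (R ⧸ q) with hF
  set π : R →+* F := (algebraMap (R ⧸ q) F).comp (Ideal.Quotient.mk q) with hπdef
  have hπ : ∀ y : R, π y = 0 ↔ y ∈ q := by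
    intro y
    rw [hπdef, RingHom.comp_apply, IsFractionRing.to_map_eq_zero_iff,
      Ideal.Quotient.eq_zero_iff_mem]
  have hmapdet : ∀ {s : ℕ} (f : Fin s → Fin s → R),
      (Matrix.of fun i l => π (f i l)).det = π (Matrix.of f).det := by
    intro s f
    rw [RingHom.map_det]
    congr 1
  set c : Fin t' → Fin m → F := fun l i => π (Bv (g0 l) i) with hc
  set a : Fin n → Fin m → F := fun j i => π (A j i) with ha
  have hC0 : (Matrix.of fun i l => c l (r0 i)).det ≠ 0 := by
    rw [hc]
    intro h0
    have := (hmapdet (fun i l => Bv (g0 l) (r0 i))) ▸ h0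
    exact hdq ((hπ _).mp this)
  have haj : ∀ j, a j ∈ Submodule.span F (Set.range c) := by
    intro j
    apply mem_span_of_dets_eq_zero c (a j) r0 hC0
    intro rr
    apply det_comp_zero_of_strictMono (Fin.snoc c (a j))
    intro rr' hrr'
    have hsnoc : ∀ l : Fin (t' + 1), ∀ i : Fin m,
        (Fin.snoc c (a j) : Fin (t' + 1) → Fin m → F) l i
          = π ((Fin.snoc (fun l' => Bv (g0 l')) (A j) : Fin (t' + 1) → Fin m → R) l i) := by
      intro l i
      induction l using Fin.lastCases with
      | last => simp [Fin.snoc_last, ha]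
      | cast l' => simp [Fin.snoc_castSucc, hc]
    have heq : (Matrix.of fun i l => (Fin.snoc c (a j) : Fin (t' + 1) → Fin m → F) l (rr' i))
        = Matrix.of fun i l => π ((Fin.snoc (fun l' => Bv (g0 l')) (A j)
            : Fin (t' + 1) → Fin m → R) l (rr' i)) := by
      ext i l; simp only [Matrix.of_apply]; exact hsnoc l (rr' i)
    rw [heq, hmapdet]
    exact (hπ _).mpr (hcon rr' g0 hrr' hg0 hg0k j)
  -- hence all m-minors of A vanish mod q, contradiction
  apply hA
  rw [tminors, Ideal.span_le]
  rintro d ⟨r, g, hr, hg, hgn, rfl⟩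
  rw [strictMono_fin_id hr]
  have hdet0 : (Matrix.of fun i l => a (g l) i).det = 0 := by
    apply det_eq_zero_of_cols_in_span (Nat.lt_of_lt_of_le (Nat.lt_succ_self t') htm)
      (fun l => a (g l)) c
    intro l; exact haj (g l)
  have : (Matrix.of fun i l => a (g l) i) = Matrix.of fun i l => π (A (g l) i) := rfl
  rw [this, hmapdet] at hdet0
  exact (hπ _).mp hdet0

/-- Columns obtained from the columns of `A` via the coefficient vectors `w 0, w 1, …`. -/
def Bcols {m n : ℕ} (A : Fin n → Fin m → R) (w : ℕ → Fin n → R) : Fin n → Fin m → R :=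
  fun c i => ∑ l, w (c : ℕ) l * A l i

lemma step_lemma [IsLocalRing R] [IsNoetherianRing R] [Infinite (ResidueField R)]
    {m n : ℕ} (hmn : m < n) (A : Fin n → Fin m → R)
    (hhtA : ∀ q : PrimeSpectrum R, tminors m m A n ≤ q.asIdeal →
      ((n - m : ℕ) : ℕ∞) ≤ Order.height q)
    (k : ℕ) (hkn : k < n) (w : ℕ → Fin n → R)
    (hlin : LinearIndependent (ResidueField R)
      (fun c : Fin k => fun l => residue R (w (c : ℕ) l)))
    (hht : ∀ t k' : ℕ, 1 ≤ t → t ≤ m → t ≤ k' → k' ≤ k → ∀ p : PrimeSpectrum R,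
      tminors m t (Bcols A w) k' ≤ p.asIdeal →
      ((min (k' - t + 1) (n - m) : ℕ) : ℕ∞) ≤ Order.height p) :
    ∃ u : Fin n → R,
      (LinearIndependent (ResidueField R)
        (fun c : Fin (k + 1) => fun l => residue R ((Function.update w k u) (c : ℕ) l))) ∧
      (∀ t k' : ℕ, 1 ≤ t → t ≤ m → t ≤ k' → k' ≤ k + 1 → ∀ p : PrimeSpectrum R,
        tminors m t (Bcols A (Function.update w k u)) k' ≤ p.asIdeal →
        ((min (k' - t + 1) (n - m) : ℕ) : ℕ∞) ≤ Order.height p) := by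
  classical
  set K := ResidueField R with hK
  set τ : (Fin n → R) → (Fin n → K) := fun v l => residue R (v l) with hτ
  -- the obstruction set
  set Obs : Set (ℕ × Ideal R) := {tq | 1 ≤ tq.1 ∧ tq.1 ≤ m ∧ tq.1 ≤ k + 1 ∧
    tq.2 ∈ (tminors m tq.1 (Bcols A w) k).minimalPrimes ∧
    ∀ hq : tq.2.IsPrime, Order.height (⟨tq.2, hq⟩ : PrimeSpectrum R)
      < ((min (k + 1 - tq.1 + 1) (n - m) : ℕ) : ℕ∞)} with hObs
  have hObsfin : Obs.Finite := by
    apply Set.Finite.subset (Set.Finite.biUnion (Set.finite_Icc 1 (k + 1))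
      (fun t _ => ((minimalPrimes_finite (tminors m t (Bcols A w) k)).image (fun q => (t, q)))))
    rintro ⟨t, q⟩ ⟨h1, h2, h3, h4, h5⟩
    exact Set.mem_biUnion (Set.mem_Icc.mpr ⟨h1, h3⟩) ⟨q, h4, rfl⟩
  -- selection of a proper subspace for each obstruction
  have hsel : ∀ tq : {x : ℕ × Ideal R // x ∈ Obs}, ∃ V : Submodule K (Fin n → K), V ≠ ⊤ ∧
      ∀ u : Fin n → R, τ u ∉ V →
        ¬ tminors m tq.1.1 (Bcols A (Function.update w k u)) (k + 1) ≤ tq.1.2 := by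
    rintro ⟨⟨t, q⟩, ht1, htm, htk, hqmin, hqlt⟩
    have hqprime : q.IsPrime := hqmin.1.1
    obtain ⟨t', rfl⟩ : ∃ t', t = t' + 1 := ⟨t - 1, by omega⟩
    have hboundlt := hqlt hqprime
    have harith : k + 1 - (t' + 1) + 1 = k - t' + 1 := by omega
    have hsome : ¬ tminors m t' (Bcols A w) k ≤ q := by
      rcases Nat.eq_zero_or_pos t' with h0 | hpos
      · subst h0
        rw [tminors_zero]
        intro hle
        exact hqprime.ne_top (top_le_iff.mp hle)
      · intro hle
        have h3 := hht t' k hpos (by omega) (by omega) le_rfl ⟨q, hqprime⟩ hle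
        rw [harith] at hboundlt
        exact absurd h3 (not_le.mpr hboundlt)
    have hAq : ¬ tminors m m A n ≤ q := by
      intro hle
      have h1 := hhtA ⟨q, hqprime⟩ hle
      have h2 : ((min (k + 1 - (t' + 1) + 1) (n - m) : ℕ) : ℕ∞) ≤ ((n - m : ℕ) : ℕ∞) :=
        Nat.cast_le.mpr (min_le_right _ _)
      exact absurd h1 (not_le.mpr (lt_of_lt_of_le hboundlt h2))
    obtain ⟨rr, gg, hrr, hgg, hggk, j₀, hj₀⟩ :=
      exists_good_minor A hqprime htm (Bcols A w) hsome hAq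
    set cj : Fin n → R := fun j =>
      (Matrix.of fun i l =>
        (Fin.snoc (fun l' => Bcols A w (gg l')) (A j) : Fin (t' + 1) → Fin m → R) l (rr i)).det
      with hcj
    set N : Submodule R (Fin n → R) := {
      carrier := {u | ∑ j, u j * cj j ∈ q}
      add_mem' := fun {a b} ha hb => by
        simp only [Set.mem_setOf_eq, Pi.add_apply, add_mul, Finset.sum_add_distrib] at *
        exact q.add_mem ha hb
      zero_mem' := by simp
      smul_mem' := fun r a ha => by
        simp only [Set.mem_setOf_eq, Pi.smul_apply, smul_eq_mul, mul_assoc,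
          ← Finset.mul_sum] at *
        exact Ideal.mul_mem_left q r ha } with hN
    have hsingle : ∑ j, (Pi.single j₀ (1 : R) : Fin n → R) j * cj j = cj j₀ := by
      rw [Finset.sum_eq_single j₀]
      · simp
      · intro b _ hb; simp [Pi.single_apply, hb]
      · intro h; exact absurd (Finset.mem_univ _) h
    have hNj₀ : (Pi.single j₀ (1 : R) : Fin n → R) ∉ N := by
      intro hmem
      have : ∑ j, (Pi.single j₀ (1 : R) : Fin n → R) j * cj j ∈ q := hmem
      rw [hsingle] at this
      exact hj₀ this
    set W : Submodule K (Fin n → K) := {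
      carrier := τ '' N
      add_mem' := fun {a b} ha hb => by
        obtain ⟨va, hva, rfl⟩ := ha
        obtain ⟨vb, hvb, rfl⟩ := hb
        exact ⟨va + vb, N.add_mem hva hvb, by funext l; simp [hτ]⟩
      zero_mem' := ⟨0, N.zero_mem, by funext l; simp [hτ]⟩
      smul_mem' := fun c x hx => by
        obtain ⟨v, hv, rfl⟩ := hx
        obtain ⟨r, hr⟩ := residue_surjective (R := R) c
        exact ⟨r • v, N.smul_mem r hv, by funext l; simp [hτ, ← hr]⟩ } with hW
    have hWproper : W ≠ ⊤ := by
      intro htop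
      apply hNj₀
      have hNtop : N = ⊤ := by
        apply submodule_eq_top_of_residue
        rw [eq_top_iff]
        rintro v -
        have hvW : τ v ∈ W := htop ▸ Submodule.mem_top
        obtain ⟨y, hyN, hyv⟩ := hvW
        have hsub : v - y ∈ (maximalIdeal R) • (⊤ : Submodule R (Fin n → R)) := by
          have hcomp : ∀ l, (v - y) l ∈ maximalIdeal R := by
            intro l
            have := congrFun hyv l
            rw [← residue_eq_zero_iff]
            simp only [Pi.sub_apply, map_sub]
            rw [show residue R (y l) = residue R (v l) from this, sub_self]
          have hpse : ∀ l : Fin n, ((v - y) l) • (Pi.single l (1 : R) : Fin n → R)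
              = Pi.single l ((v - y) l) := by
            intro l
            ext l'
            by_cases h : l' = l <;> simp [Pi.single_apply, h]
          have hdecomp : v - y = ∑ l, ((v - y) l) • (Pi.single l (1 : R) : Fin n → R) := by
            simp only [hpse]
            exact (Finset.univ_sum_single _).symm
          rw [hdecomp]
          exact Submodule.sum_mem _ fun l _ =>
            Submodule.smul_mem_smul (hcomp l) Submodule.mem_top
        have : v = y + (v - y) := by ring
        rw [this]
        exact Submodule.add_mem_sup hyN hsub
      rw [hNtop]
      exact Submodule.mem_top
    refine ⟨W, hWproper, ?_⟩
    intro u huW hle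
    have huN : u ∉ N := fun huN => huW ⟨u, huN, rfl⟩
    have husum : ∑ j, u j * cj j ∉ q := huN
    apply husum
    -- the new minor
    set w' := Function.update w k u with hw'
    have hBold : ∀ c : Fin n, (c : ℕ) < k → Bcols A w' c = Bcols A w c := by
      intro c hc
      funext i
      simp only [Bcols, hw']
      rw [Function.update_of_ne (by omega : (c : ℕ) ≠ k)]
    set g : Fin (t' + 1) → Fin n := Fin.snoc gg (⟨k, hkn⟩ : Fin n) with hg
    have hgmono : StrictMono g := by
      apply strictMono_snoc hgg
      intro l
      exact Fin.mk_lt_mk.mpr (hggk l) |>.trans_le (le_refl _) |>.trans_eq rfl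
    have hgk : ∀ l, (g l : ℕ) < k + 1 := by
      intro l
      induction l using Fin.lastCases with
      | last => simp [hg, Fin.snoc_last]
      | cast l' =>
        simp only [hg, Fin.snoc_castSucc]
        exact lt_trans (hggk l') (Nat.lt_succ_self k)
    set M0 : Matrix (Fin (t' + 1)) (Fin (t' + 1)) R := Matrix.of fun i l =>
      (Fin.snoc (fun l' => Bcols A w (gg l')) (0 : Fin m → R) : Fin (t' + 1) → Fin m → R)
      l (rr i) with hM0
    have hdmat : (Matrix.of fun i l => Bcols A w' (g l) (rr i))
        = M0.updateCol (Fin.last t') (fun i => Bcols A w' (⟨k, hkn⟩ : Fin n) (rr i)) := by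
      ext i l
      induction l using Fin.lastCases with
      | last =>
        rw [Matrix.updateCol_self]
        simp [hg, Fin.snoc_last]
      | cast l' =>
        rw [Matrix.updateCol_ne (Fin.castSucc_lt_last l').ne]
        simp only [Matrix.of_apply, hg, Fin.snoc_castSucc, hM0]
        rw [hBold (gg l') (hggk l')]
    have hcolval : (fun i => Bcols A w' (⟨k, hkn⟩ : Fin n) (rr i))
        = ∑ j, u j • (fun i => A j (rr i)) := by
      funext i
      simp only [Bcols, hw', Finset.sum_apply, Pi.smul_apply, smul_eq_mul]
      rw [Function.update_self]
    have hMj : ∀ j, M0.updateCol (Fin.last t') (fun i => A j (rr i))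
        = Matrix.of fun i l =>
          (Fin.snoc (fun l' => Bcols A w (gg l')) (A j) : Fin (t' + 1) → Fin m → R)
          l (rr i) := by
      intro j
      ext i l
      induction l using Fin.lastCases with
      | last =>
        rw [Matrix.updateCol_self]
        simp [Fin.snoc_last]
      | cast l' =>
        rw [Matrix.updateCol_ne (Fin.castSucc_lt_last l').ne]
        simp [hM0, Fin.snoc_castSucc]
    have hdd : (Matrix.of fun i l => Bcols A w' (g l) (rr i)).det = ∑ j, u j * cj j := by
      rw [hdmat, ← Matrix.cramer_apply, hcolval, map_sum, Finset.sum_apply]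
      apply Finset.sum_congr rfl
      intro j _
      rw [_root_.map_smul, Pi.smul_apply, smul_eq_mul, Matrix.cramer_apply, hMj j]
    rw [← hdd]
    apply hle
    exact Ideal.subset_span ⟨rr, g, hrr, hgmono, hgk, rfl⟩
  choose Vsel hV1 hV2 using hsel
  set spanPrev : Submodule K (Fin n → K) :=
    Submodule.span K (Set.range fun c : Fin k => fun l => residue R (w (c : ℕ) l))
    with hspanPrev
  have hspanproper : spanPrev ≠ ⊤ := by
    intro htop
    have hfr1 : Module.finrank K ↥spanPrev ≤ k := by
      refine le_trans (finrank_span_le_card _) ?_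
      rw [Set.toFinset_range]
      exact le_trans (Finset.card_image_le) (by simp)
    rw [htop, finrank_top, Module.finrank_fintype_fun_eq_card, Fintype.card_fin] at hfr1
    omega
  haveI : Finite ↥Obs := hObsfin.to_subtype
  set 𝒮 : Set (Submodule K (Fin n → K)) := insert spanPrev (Set.range Vsel) with h𝒮
  have h𝒮fin : 𝒮.Finite := (Set.finite_range Vsel).insert _
  have h𝒮proper : ∀ V ∈ 𝒮, V ≠ ⊤ := by
    rintro V (rfl | ⟨tq, rfl⟩)
    · exact hspanproper
    · exact hV1 tq
  obtain ⟨x, hx⟩ := exists_avoid_subspaces h𝒮fin h𝒮proper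
  have hu' := fun l => residue_surjective (R := R) (x l)
  choose u hu using hu'
  have hτu : τ u = x := funext hu
  refine ⟨u, ?_, ?_⟩
  · -- linear independence
    have heq : (fun c : Fin (k + 1) => fun l => residue R ((Function.update w k u) (c : ℕ) l))
        = Fin.snoc (fun c : Fin k => fun l => residue R (w (c : ℕ) l)) (τ u) := by
      funext c
      induction c using Fin.lastCases with
      | last =>
        rw [Fin.snoc_last]
        funext l
        simp only [Fin.val_last]
        rw [Function.update_self]
      | cast c' =>
        rw [Fin.snoc_castSucc]
        funext l
        simp only [Fin.coe_castSucc]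
        rw [Function.update_of_ne (by have := c'.isLt; omega : (c' : ℕ) ≠ k)]
    rw [heq, linearIndependent_fin_snoc]
    refine ⟨hlin, ?_⟩
    rw [hτu]
    exact hx spanPrev (Set.mem_insert _ _)
  · -- heights
    intro t k' ht1 htm' htk' hk'k1 p hple
    rcases le_or_gt k' k with hk'k | hk'k
    · have hcongr : tminors m t (Bcols A (Function.update w k u)) k'
          = tminors m t (Bcols A w) k' := by
        apply tminors_congr
        intro j hj
        funext i
        simp only [Bcols]
        rw [Function.update_of_ne (by omega : (j : ℕ) ≠ k)]
      rw [hcongr] at hple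
      exact hht t k' ht1 htm' htk' hk'k p hple
    · have hk'eq : k' = k + 1 := by omega
      subst hk'eq
      have hIold : tminors m t (Bcols A w) k ≤ p.asIdeal := by
        have h1 : tminors m t (Bcols A w) k
            = tminors m t (Bcols A (Function.update w k u)) k := by
          apply tminors_congr
          intro j hj
          funext i
          simp only [Bcols]
          rw [Function.update_of_ne (by omega : (j : ℕ) ≠ k)]
        rw [h1]
        exact le_trans (tminors_mono m t _ (Nat.le_succ k)) hple
      haveI hpp : p.asIdeal.IsPrime := p.2
      obtain ⟨q, hqmin, hqp⟩ := Ideal.exists_minimalPrimes_le hIold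
      have hqprime : q.IsPrime := hqmin.1.1
      set Q : PrimeSpectrum R := ⟨q, hqprime⟩ with hQ
      by_cases hcase : ((min (k + 1 - t + 1) (n - m) : ℕ) : ℕ∞) ≤ Order.height Q
      · exact le_trans hcase (Order.height_mono (show Q ≤ p from hqp))
      · have hObsmem : (t, q) ∈ Obs :=
          ⟨ht1, htm', htk', hqmin, fun hq => not_le.mp hcase⟩
        have hVmem : Vsel ⟨(t, q), hObsmem⟩ ∈ 𝒮 :=
          Set.mem_insert_of_mem _ ⟨⟨(t, q), hObsmem⟩, rfl⟩
        have hgood : ¬ tminors m t (Bcols A (Function.update w k u)) (k + 1) ≤ q :=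
          hV2 ⟨(t, q), hObsmem⟩ u (by rw [hτu]; exact hx _ hVmem)
        have hqlt : q < p.asIdeal := lt_of_le_of_ne hqp (by
          intro hqe
          rw [hqe] at hgood
          exact hgood hple)
        have hQp : Q < p := by
          rw [lt_iff_le_and_ne]
          refine ⟨hqp, ?_⟩
          intro h
          have h2 := congrArg PrimeSpectrum.asIdeal h
          rw [show Q.asIdeal = q from rfl] at h2
          rw [h2] at hqlt
          exact absurd hqlt (lt_irrefl _)
        have hstep := height_add_one_le hQp
        rcases le_or_gt t k with htk2 | htk2
        · have hlow := hht t k ht1 htm' htk2 le_rfl Q hqmin.1.2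
          have h2 : ((min (k - t + 1) (n - m) : ℕ) : ℕ∞) + 1 ≤ Order.height p :=
            le_trans (add_le_add_left hlow 1) hstep
          refine le_trans ?_ h2
          have harith2 : (k + 1 - t + 1) ⊓ (n - m) ≤ ((k - t + 1) ⊓ (n - m)) + 1 := by
            omega
          exact_mod_cast Nat.cast_le.mpr harith2
        · have h2 : (1 : ℕ∞) ≤ Order.height p := le_trans le_add_self hstep
          refine le_trans ?_ h2
          have harith2 : (k + 1 - t + 1) ⊓ (n - m) ≤ 1 := by omega
          exact_mod_cast Nat.cast_le.mpr harith2

end Aux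

open Matrix IsLocalRing in
/-- **Lemma 2.** Let `(R, 𝔪)` be a Noetherian local Cohen–Macaulay ring with infinite
residue field and `A` an `m × n` matrix (`m < n`) with entries in `𝔪` such that
`ht I_m(A₁,…,Aₙ) ≥ n − m`. Then there is an invertible `n × n` matrix `φ` such that the
matrix `B = A·φ` satisfies `ht I_m(B₁,…,B_k) ≥ k − m + 1` for `k = m+1, …, n−1`. -/
theorem exists_column_transformation_generic_heights
    {R : Type*} [CommRing R] [IsLocalRing R] [IsNoetherianRing R]
    (hCM : IsCohenMacaulayLocalRing R)
    (hres : Infinite (IsLocalRing.ResidueField R))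
    (m n : ℕ) (hmn : m < n) (A : Fin n → (Fin m → R))
    (hA : ∀ j i, A j i ∈ IsLocalRing.maximalIdeal R)
    (hht : ((n - m : ℕ) : ℕ∞) ≤ idealHeight (minorIdeal m n A n)) :
    ∃ φ : Matrix (Fin n) (Fin n) R, IsUnit φ ∧
      ∀ k : ℕ, m + 1 ≤ k → k ≤ n - 1 →
        ((k - m + 1 : ℕ) : ℕ∞) ≤
          idealHeight (minorIdeal m n
            (fun j i => ((Matrix.of fun i' j' => A j' i') * φ) i j) k) := by
  classical
  rcases Nat.eq_zero_or_pos m with hm0 | hm1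
  · subst hm0
    refine ⟨1, isUnit_one, ?_⟩
    intro k hk1 hk2
    have htop : ∀ B : Fin n → Fin 0 → R, minorIdeal 0 n B k = ⊤ := by
      intro B
      rw [Ideal.eq_top_iff_one]
      refine Ideal.subset_span ⟨Fin.elim0, ?_, fun l => l.elim0, Matrix.det_fin_zero.symm⟩
      intro a b _; exact a.elim0
    rw [htop]
    unfold idealHeight
    refine le_iInf fun p => le_iInf fun hp => ?_
    exact absurd (top_le_iff.mp hp) p.2.ne_top
  haveI : Infinite (ResidueField R) := hres
  have hhtA : ∀ q : PrimeSpectrum R, tminors m m A n ≤ q.asIdeal →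
      ((n - m : ℕ) : ℕ∞) ≤ Order.height q := by
    intro q hq
    refine le_trans hht ?_
    unfold idealHeight
    exact iInf₂_le q (by rwa [tminors_eq_minorIdeal] at hq)
  have build : ∀ k : ℕ, k ≤ n → ∃ w : ℕ → Fin n → R,
      (LinearIndependent (ResidueField R)
        (fun c : Fin k => fun l => residue R (w (c : ℕ) l))) ∧
      (∀ t k' : ℕ, 1 ≤ t → t ≤ m → t ≤ k' → k' ≤ k → ∀ p : PrimeSpectrum R,
        tminors m t (Bcols A w) k' ≤ p.asIdeal →
        ((min (k' - t + 1) (n - m) : ℕ) : ℕ∞) ≤ Order.height p) := by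
    intro k
    induction k with
    | zero =>
      intro _
      refine ⟨fun _ _ => 0, linearIndependent_empty_type, ?_⟩
      intro t k' h1 h2 h3 h4 p hp
      exact absurd (h1.trans (h3.trans h4)) (by omega)
    | succ k ih =>
      intro hk
      obtain ⟨w, hw1, hw2⟩ := ih (by omega)
      obtain ⟨u, hu1, hu2⟩ := step_lemma hmn A hhtA k (by omega) w hw1 hw2
      exact ⟨Function.update w k u, hu1, hu2⟩
  obtain ⟨w, hw1, hw2⟩ := build n le_rfl
  set φ : Matrix (Fin n) (Fin n) R := Matrix.of fun l c => w (c : ℕ) l with hφ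
  have hBeq : (fun (j : Fin n) (i : Fin m) => ((Matrix.of fun i' j' => A j' i') * φ) i j)
      = Bcols A w := by
    funext j i
    simp only [Matrix.mul_apply, Matrix.of_apply, Bcols, hφ]
    exact Finset.sum_congr rfl fun l _ => mul_comm _ _
  have hφunit : IsUnit φ := by
    rw [Matrix.isUnit_iff_isUnit_det]
    have hres0 : residue R φ.det ≠ 0 := by
      have hmap : residue R φ.det = ((residue R).mapMatrix φ).det := RingHom.map_det _ _
      have hcols : LinearIndependent (ResidueField R)
          (fun c => ((residue R).mapMatrix φ)ᵀ c) := by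
        have heq : (fun c => ((residue R).mapMatrix φ)ᵀ c)
            = fun (c : Fin n) => fun l => residue R (w (c : ℕ) l) := by
          funext c l
          simp [hφ, Matrix.transpose_apply, RingHom.mapMatrix_apply, Matrix.map_apply]
        rw [heq]
        exact hw1
      have hunit := Matrix.linearIndependent_cols_iff_isUnit.mp hcols
      rw [hmap]
      exact ((Matrix.isUnit_iff_isUnit_det _).mp hunit).ne_zero
    by_contra hnot
    exact hres0 ((residue_eq_zero_iff _).mpr ((mem_maximalIdeal _).mpr hnot))
  refine ⟨φ, hφunit, ?_⟩
  intro k hk1 hk2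
  rw [hBeq, ← tminors_eq_minorIdeal]
  unfold idealHeight
  refine le_iInf fun p => le_iInf fun hp => ?_
  have hres2 := hw2 m k hm1 le_rfl (by omega) (by omega) p hp
  have harith : (k - m + 1) ⊓ (n - m) = k - m + 1 := by omega
  rwa [harith] at hres2
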